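/- The complement in X₁ of the single point given by the class of (0,0) (equivalently, of (0,1)) is not connected. -/
import Mathlib


open OnePoint

/-- Identifications `(0,0)∼(0,1)`, `(1,0)∼(2,0)`, `(1,1)∼(2,1)` on `S × Fin 2`. -/
def relEx3₁ : OnePoint ℂ × Fin 2 → OnePoint ℂ × Fin 2 → Prop := fun a b =>
  (a = (((0 : ℂ) : OnePoint ℂ), 0) ∧ b = (((0 : ℂ) : OnePoint ℂ), 1)) ∨
  (a = (((1 : ℂ) : OnePoint ℂ), 0) ∧ b = (((2 : ℂ) : OnePoint ℂ), 0)) ∨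
  (a = (((1 : ℂ) : OnePoint ℂ), 1) ∧ b = (((2 : ℂ) : OnePoint ℂ), 1))

namespace Ex3Aux

def pu : OnePoint ℂ × Fin 2 → Prop := fun a => a.1 ≠ ((0 : ℂ) : OnePoint ℂ) ∧ a.2 = 0
def pv : OnePoint ℂ × Fin 2 → Prop := fun a => a.1 ≠ ((0 : ℂ) : OnePoint ℂ) ∧ a.2 = 1
def pz : OnePoint ℂ × Fin 2 → Prop := fun a => a.1 = ((0 : ℂ) : OnePoint ℂ)

lemma one_ne : (((1 : ℂ) : OnePoint ℂ)) ≠ (((0 : ℂ) : OnePoint ℂ)) := by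
  simp [OnePoint.coe_eq_coe]

lemma two_ne : (((2 : ℂ) : OnePoint ℂ)) ≠ (((0 : ℂ) : OnePoint ℂ)) := by
  simp [OnePoint.coe_eq_coe]

lemma hu : ∀ a b, relEx3₁ a b → pu a = pu b := by
  rintro a b (⟨rfl, rfl⟩ | ⟨rfl, rfl⟩ | ⟨rfl, rfl⟩) <;>
    simp [pu, one_ne, two_ne]

lemma hv : ∀ a b, relEx3₁ a b → pv a = pv b := by
  rintro a b (⟨rfl, rfl⟩ | ⟨rfl, rfl⟩ | ⟨rfl, rfl⟩) <;>
    simp [pv, one_ne, two_ne]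

lemma hz : ∀ a b, relEx3₁ a b → pz a = pz b := by
  rintro a b (⟨rfl, rfl⟩ | ⟨rfl, rfl⟩ | ⟨rfl, rfl⟩) <;>
    simp [pz, one_ne, two_ne]

/-- Points with nonzero first coordinate are not identified with the node. -/
lemma mk_ne_node {a : OnePoint ℂ × Fin 2} (ha : a.1 ≠ ((0 : ℂ) : OnePoint ℂ)) :
    Quot.mk relEx3₁ a ≠ Quot.mk relEx3₁ (((0 : ℂ) : OnePoint ℂ), 0) := by
  intro h
  have := congrArg (Quot.lift pz hz) h
  simp only [Quot.lift_mk, pz, eq_self_iff_true, eq_iff_iff, iff_true] at this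
  exact ha this

lemma isOpen_lift (p : OnePoint ℂ × Fin 2 → Prop) (hp : ∀ a b, relEx3₁ a b → p a = p b)
    (hop : IsOpen {a : OnePoint ℂ × Fin 2 | p a}) :
    IsOpen {q : Quot relEx3₁ | Quot.lift p hp q} := by
  rw [← (isQuotientMap_quot_mk (r := relEx3₁)).isOpen_preimage]
  exact hop

lemma isOpen_pu_set : IsOpen {a : OnePoint ℂ × Fin 2 | pu a} := by
  have : {a : OnePoint ℂ × Fin 2 | pu a} =
      ({((0 : ℂ) : OnePoint ℂ)}ᶜ : Set (OnePoint ℂ)) ×ˢ ({0} : Set (Fin 2)) := by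
    ext ⟨x, i⟩; simp only [pu, Set.mem_prod, Set.mem_setOf_eq, Set.mem_compl_iff, Set.mem_singleton_iff]
  rw [this]
  exact (isClosed_singleton.isOpen_compl).prod (isOpen_discrete _)

lemma isOpen_pv_set : IsOpen {a : OnePoint ℂ × Fin 2 | pv a} := by
  have : {a : OnePoint ℂ × Fin 2 | pv a} =
      ({((0 : ℂ) : OnePoint ℂ)}ᶜ : Set (OnePoint ℂ)) ×ˢ ({1} : Set (Fin 2)) := by
    ext ⟨x, i⟩; simp only [pv, Set.mem_prod, Set.mem_setOf_eq, Set.mem_compl_iff, Set.mem_singleton_iff]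
  rw [this]
  exact (isClosed_singleton.isOpen_compl).prod (isOpen_discrete _)

end Ex3Aux

/-- the complement in `X₁ = Quot relEx3₁` of the class of `(0,0)` is not
connected. -/
theorem double_cover_statement_14 :
    ¬ IsConnected ({Quot.mk relEx3₁ (((0 : ℂ) : OnePoint ℂ), 0)}ᶜ : Set (Quot relEx3₁)) := by
  open Ex3Aux in
  rintro ⟨-, hconn⟩
  set U : Set (Quot relEx3₁) := {q | Quot.lift pu hu q} with hU
  set V : Set (Quot relEx3₁) := {q | Quot.lift pv hv q} with hV
  have hUopen : IsOpen U := isOpen_lift pu hu isOpen_pu_set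
  have hVopen : IsOpen V := isOpen_lift pv hv isOpen_pv_set
  have hcover : ({Quot.mk relEx3₁ (((0 : ℂ) : OnePoint ℂ), 0)}ᶜ : Set (Quot relEx3₁)) ⊆ U ∪ V := by
    intro q hq
    obtain ⟨⟨x, i⟩, rfl⟩ := Quot.exists_rep q
    by_cases h0 : x = ((0 : ℂ) : OnePoint ℂ)
    · exfalso
      apply hq
      simp only [Set.mem_singleton_iff]
      subst h0
      fin_cases i
      · rfl
      · exact (Quot.sound (show relEx3₁ _ _ from Or.inl ⟨rfl, rfl⟩)).symm
    · fin_cases i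
      · exact Or.inl (show pu (x, 0) from ⟨h0, rfl⟩)
      · exact Or.inr (show pv (x, 1) from ⟨h0, rfl⟩)
  have hUne : (({Quot.mk relEx3₁ (((0 : ℂ) : OnePoint ℂ), 0)}ᶜ : Set (Quot relEx3₁)) ∩ U).Nonempty := by
    refine ⟨Quot.mk relEx3₁ (((1 : ℂ) : OnePoint ℂ), 0), ?_, ?_⟩
    · exact mk_ne_node one_ne
    · show pu (((1 : ℂ) : OnePoint ℂ), 0)
      exact ⟨one_ne, rfl⟩
  have hVne : (({Quot.mk relEx3₁ (((0 : ℂ) : OnePoint ℂ), 0)}ᶜ : Set (Quot relEx3₁)) ∩ V).Nonempty := by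
    refine ⟨Quot.mk relEx3₁ (((1 : ℂ) : OnePoint ℂ), 1), ?_, ?_⟩
    · exact mk_ne_node one_ne
    · show pv (((1 : ℂ) : OnePoint ℂ), 1)
      exact ⟨one_ne, rfl⟩
  obtain ⟨q, -, hqU, hqV⟩ := hconn U V hUopen hVopen hcover hUne hVne
  obtain ⟨a, rfl⟩ := Quot.exists_rep q
  have h1 : a.2 = 0 := hqU.2
  have h2 : a.2 = 1 := hqV.2
  simp [h1] at h2
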